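/- For any finite abstract simplicial complex G, the Gauss-Bonnet formula Σ_x K⁺(x) = χ(G) holds, where K⁺(x) = (-1)^{dim(x)}(1 - χ(S(x))) and S(x) is the unit sphere of the face x in the barycentric refinement graph G₁. -/

import Mathlib

open Finset Matrix

/-- The connection matrix `L' = 1 + A'` of a finite abstract simplicial complex `G`:
`L'_{xy} = 1` iff the faces `x` and `y` intersect (in particular `L'_{xx} = 1`). -/
def connMat {V : Type*} [DecidableEq V] (G : Finset (Finset V)) :
    Matrix G G ℚ := fun x y =>
  if ((x : Finset V) ∩ (y : Finset V)).Nonempty then 1 else 0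

/-- Euler characteristic `χ(G) = ∑_x (-1)^{dim x}` with `dim x = card x - 1`. -/
def eulerChar {V : Type*} [DecidableEq V] (G : Finset (Finset V)) : ℚ :=
  ∑ x ∈ G, (-1 : ℚ) ^ (x.card - 1)

/-- The Euler characteristic of the clique complex of the graph on the collection `S`
of faces in which two faces are adjacent iff one strictly contains the other:
cliques are the nonempty chains in `S`. -/
def chainChi {V : Type*} [DecidableEq V] (S : Finset (Finset V)) : ℚ :=
  ∑ c ∈ S.powerset.filter
      (fun c => c.Nonempty ∧ ∀ y ∈ c, ∀ z ∈ c, y ⊆ z ∨ z ⊆ y),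
    (-1 : ℚ) ^ (c.card - 1)

/-- The Euler characteristic of the unit sphere `S(x)` of the face `x` in the
barycentric refinement graph `G₁` (neighbors of `x`: faces comparable to `x`). -/
def sphereChi {V : Type*} [DecidableEq V] (G : Finset (Finset V)) (x : Finset V) : ℚ :=
  chainChi (G.filter (fun y => y ⊂ x ∨ x ⊂ y))

/-- The unstable curvature `K⁺(x) = (-1)^{dim x} (1 - χ(S(x)))`. -/
def Kplus {V : Type*} [DecidableEq V] (G : Finset (Finset V)) (x : Finset V) : ℚ :=
  (-1 : ℚ) ^ (x.card - 1) * (1 - sphereChi G x)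

section Aux

set_option linter.unusedSectionVars false


variable {V : Type*} [DecidableEq V]

def IsChainF (c : Finset (Finset V)) : Prop := ∀ y ∈ c, ∀ z ∈ c, y ⊆ z ∨ z ⊆ y

instance : DecidablePred (IsChainF (V := V)) := fun _ => by unfold IsChainF; infer_instance

def chainsOf (S : Finset (Finset V)) : Finset (Finset (Finset V)) :=
  S.powerset.filter IsChainF

def csum (S : Finset (Finset V)) : ℚ := ∑ c ∈ chainsOf S, (-1 : ℚ) ^ c.card

lemma mem_chainsOf {S c : Finset (Finset V)} :
    c ∈ chainsOf S ↔ c ⊆ S ∧ IsChainF c := by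
  simp [chainsOf, mem_filter, mem_powerset]

lemma empty_mem_chainsOf (S : Finset (Finset V)) : (∅ : Finset (Finset V)) ∈ chainsOf S :=
  mem_chainsOf.2 ⟨empty_subset _, by intro y hy; simp at hy⟩

lemma neg_one_pow_pred {k : ℕ} (hk : 1 ≤ k) : ((-1 : ℚ)) ^ (k - 1) = -(-1) ^ k := by
  obtain ⟨n, rfl⟩ := Nat.exists_eq_add_of_le hk
  simp [pow_add]

lemma chain_exists_max {c : Finset (Finset V)} (hc : IsChainF c) (hne : c.Nonempty) :
    ∃ m ∈ c, ∀ y ∈ c, y ⊆ m := by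
  obtain ⟨m, hm, hmax⟩ := Finset.exists_max_image c (fun y => y.card) hne
  refine ⟨m, hm, fun y hy => ?_⟩
  rcases hc y hy m hm with h | h
  · exact h
  · exact (Finset.eq_of_subset_of_card_le h (hmax y hy)).ge

lemma chain_exists_min {c : Finset (Finset V)} (hc : IsChainF c) (hne : c.Nonempty) :
    ∃ m ∈ c, ∀ y ∈ c, m ⊆ y := by
  obtain ⟨m, hm, hmin⟩ := Finset.exists_min_image c (fun y => y.card) hne
  refine ⟨m, hm, fun y hy => ?_⟩
  rcases hc m hm y hy with h | h
  · exact h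
  · exact (Finset.eq_of_subset_of_card_le h (hmin y hy)).symm.le

def maxOf (c : Finset (Finset V)) : Finset V := c.sup id

noncomputable def minOf (c : Finset (Finset V)) : Finset V :=
  if h : c.Nonempty then c.inf' h id else ∅

lemma maxOf_spec {c : Finset (Finset V)} (hc : IsChainF c) (hne : c.Nonempty) :
    maxOf c ∈ c ∧ ∀ y ∈ c, y ⊆ maxOf c := by
  obtain ⟨m, hm, hmax⟩ := chain_exists_max hc hne
  have : maxOf c = m := le_antisymm (Finset.sup_le fun y hy => hmax y hy) (Finset.le_sup (f := id) hm)
  rw [this]; exact ⟨hm, hmax⟩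

lemma minOf_spec {c : Finset (Finset V)} (hc : IsChainF c) (hne : c.Nonempty) :
    minOf c ∈ c ∧ ∀ y ∈ c, minOf c ⊆ y := by
  obtain ⟨m, hm, hmin⟩ := chain_exists_min hc hne
  have : minOf c = m := by
    rw [minOf, dif_pos hne]
    exact le_antisymm (Finset.inf'_le id hm) (Finset.le_inf' _ _ fun y hy => hmin y hy)
  rw [this]; exact ⟨hm, hmin⟩

lemma csum_eq_max (S : Finset (Finset V)) :
    csum S = 1 - ∑ m ∈ S, csum (S.filter (· ⊂ m)) := by
  have h0 : csum S = (∑ c ∈ (chainsOf S).erase ∅, (-1:ℚ)^c.card) + 1 := by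
    rw [csum, ← Finset.sum_erase_add _ _ (empty_mem_chainsOf S)]
    simp
  have hmaps : ∀ c ∈ (chainsOf S).erase ∅, maxOf c ∈ S := by
    intro c hc
    obtain ⟨hne, hcS⟩ := Finset.mem_erase.1 hc
    obtain ⟨hsub, hch⟩ := mem_chainsOf.1 hcS
    exact hsub ((maxOf_spec hch (Finset.nonempty_iff_ne_empty.2 hne)).1)
  have h1 : ∑ c ∈ (chainsOf S).erase ∅, (-1:ℚ)^c.card
      = ∑ m ∈ S, ∑ c ∈ ((chainsOf S).erase ∅).filter (fun c => maxOf c = m), (-1:ℚ)^c.card :=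
    (Finset.sum_fiberwise_of_maps_to hmaps _).symm
  have h2 : ∀ m ∈ S, (∑ c ∈ ((chainsOf S).erase ∅).filter (fun c => maxOf c = m), (-1:ℚ)^c.card)
      = - csum (S.filter (· ⊂ m)) := by
    intro m hm
    have key : (∑ c ∈ ((chainsOf S).erase ∅).filter (fun c => maxOf c = m), (-1:ℚ)^c.card)
        = ∑ b ∈ chainsOf (S.filter (· ⊂ m)), -((-1:ℚ)^b.card) := by
      refine Finset.sum_nbij' (fun c => c.erase m) (fun b => insert m b) ?_ ?_ ?_ ?_ ?_
      · intro c hc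
        obtain ⟨hc', hmax⟩ := Finset.mem_filter.1 hc
        obtain ⟨hne0, hcS⟩ := Finset.mem_erase.1 hc'
        obtain ⟨hsub, hch⟩ := mem_chainsOf.1 hcS
        have hne : c.Nonempty := Finset.nonempty_iff_ne_empty.2 hne0
        obtain ⟨hmem, hub⟩ := maxOf_spec hch hne
        refine mem_chainsOf.2 ⟨?_, ?_⟩
        · intro y hy
          obtain ⟨hym, hyc⟩ := Finset.mem_erase.1 hy
          exact Finset.mem_filter.2 ⟨hsub hyc, by
            rw [Finset.ssubset_iff_subset_ne]
            exact ⟨hmax ▸ hub y hyc, hym⟩⟩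
        · intro y hy z hz
          exact hch y (Finset.mem_of_mem_erase hy) z (Finset.mem_of_mem_erase hz)
      · intro b hb
        obtain ⟨hsub, hch⟩ := mem_chainsOf.1 hb
        have hblt : ∀ y ∈ b, y ⊂ m := fun y hy => (Finset.mem_filter.1 (hsub hy)).2
        have hbS : ∀ y ∈ b, y ∈ S := fun y hy => (Finset.mem_filter.1 (hsub hy)).1
        have hchain : IsChainF (insert m b) := by
          intro y hy z hz
          rcases Finset.mem_insert.1 hy with rfl | hy' <;>
            rcases Finset.mem_insert.1 hz with rfl | hz'
          · exact Or.inl subset_rfl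
          · exact Or.inr (hblt z hz').subset
          · exact Or.inl (hblt y hy').subset
          · exact hch y hy' z hz'
        refine Finset.mem_filter.2 ⟨Finset.mem_erase.2 ⟨Finset.insert_ne_empty _ _, ?_⟩, ?_⟩
        · exact mem_chainsOf.2 ⟨Finset.insert_subset hm (fun y hy => hbS y hy), hchain⟩
        · refine le_antisymm (Finset.sup_le ?_) (Finset.le_sup (f := id) (Finset.mem_insert_self m b))
          intro y hy
          rcases Finset.mem_insert.1 hy with rfl | hy'
          · exact subset_rfl
          · exact (hblt y hy').subset
      · intro c hc
        obtain ⟨hc', hmax⟩ := Finset.mem_filter.1 hc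
        obtain ⟨hne0, hcS⟩ := Finset.mem_erase.1 hc'
        obtain ⟨hsub, hch⟩ := mem_chainsOf.1 hcS
        have hne : c.Nonempty := Finset.nonempty_iff_ne_empty.2 hne0
        exact Finset.insert_erase (hmax ▸ (maxOf_spec hch hne).1)
      · intro b hb
        obtain ⟨hsub, _⟩ := mem_chainsOf.1 hb
        refine Finset.erase_insert ?_
        intro hmb
        exact (Finset.mem_filter.1 (hsub hmb)).2.ne rfl
      · intro c hc
        obtain ⟨hc', hmax⟩ := Finset.mem_filter.1 hc
        obtain ⟨hne0, hcS⟩ := Finset.mem_erase.1 hc'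
        obtain ⟨hsub, hch⟩ := mem_chainsOf.1 hcS
        have hne : c.Nonempty := Finset.nonempty_iff_ne_empty.2 hne0
        have hmem : m ∈ c := hmax ▸ (maxOf_spec hch hne).1
        rw [Finset.card_erase_of_mem hmem, neg_one_pow_pred (Finset.card_pos.2 hne), neg_neg]
    rw [key, csum]
    rw [Finset.sum_neg_distrib]
  rw [h0, h1, Finset.sum_congr rfl h2, Finset.sum_neg_distrib]
  ring

lemma csum_eq_min (S : Finset (Finset V)) :
    csum S = 1 - ∑ m ∈ S, csum (S.filter (m ⊂ ·)) := by
  have h0 : csum S = (∑ c ∈ (chainsOf S).erase ∅, (-1:ℚ)^c.card) + 1 := by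
    rw [csum, ← Finset.sum_erase_add _ _ (empty_mem_chainsOf S)]
    simp
  have hmaps : ∀ c ∈ (chainsOf S).erase ∅, minOf c ∈ S := by
    intro c hc
    obtain ⟨hne, hcS⟩ := Finset.mem_erase.1 hc
    obtain ⟨hsub, hch⟩ := mem_chainsOf.1 hcS
    exact hsub ((minOf_spec hch (Finset.nonempty_iff_ne_empty.2 hne)).1)
  have h1 : ∑ c ∈ (chainsOf S).erase ∅, (-1:ℚ)^c.card
      = ∑ m ∈ S, ∑ c ∈ ((chainsOf S).erase ∅).filter (fun c => minOf c = m), (-1:ℚ)^c.card :=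
    (Finset.sum_fiberwise_of_maps_to hmaps _).symm
  have h2 : ∀ m ∈ S, (∑ c ∈ ((chainsOf S).erase ∅).filter (fun c => minOf c = m), (-1:ℚ)^c.card)
      = - csum (S.filter (m ⊂ ·)) := by
    intro m hm
    have key : (∑ c ∈ ((chainsOf S).erase ∅).filter (fun c => minOf c = m), (-1:ℚ)^c.card)
        = ∑ b ∈ chainsOf (S.filter (m ⊂ ·)), -((-1:ℚ)^b.card) := by
      refine Finset.sum_nbij' (fun c => c.erase m) (fun b => insert m b) ?_ ?_ ?_ ?_ ?_
      · intro c hc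
        obtain ⟨hc', hmin⟩ := Finset.mem_filter.1 hc
        obtain ⟨hne0, hcS⟩ := Finset.mem_erase.1 hc'
        obtain ⟨hsub, hch⟩ := mem_chainsOf.1 hcS
        have hne : c.Nonempty := Finset.nonempty_iff_ne_empty.2 hne0
        obtain ⟨hmem, hlb⟩ := minOf_spec hch hne
        refine mem_chainsOf.2 ⟨?_, ?_⟩
        · intro y hy
          obtain ⟨hym, hyc⟩ := Finset.mem_erase.1 hy
          exact Finset.mem_filter.2 ⟨hsub hyc, by
            rw [Finset.ssubset_iff_subset_ne]
            exact ⟨hmin ▸ hlb y hyc, hym.symm⟩⟩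
        · intro y hy z hz
          exact hch y (Finset.mem_of_mem_erase hy) z (Finset.mem_of_mem_erase hz)
      · intro b hb
        obtain ⟨hsub, hch⟩ := mem_chainsOf.1 hb
        have hbgt : ∀ y ∈ b, m ⊂ y := fun y hy => (Finset.mem_filter.1 (hsub hy)).2
        have hbS : ∀ y ∈ b, y ∈ S := fun y hy => (Finset.mem_filter.1 (hsub hy)).1
        have hchain : IsChainF (insert m b) := by
          intro y hy z hz
          rcases Finset.mem_insert.1 hy with rfl | hy' <;>
            rcases Finset.mem_insert.1 hz with rfl | hz'
          · exact Or.inl subset_rfl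
          · exact Or.inl (hbgt z hz').subset
          · exact Or.inr (hbgt y hy').subset
          · exact hch y hy' z hz'
        refine Finset.mem_filter.2 ⟨Finset.mem_erase.2 ⟨Finset.insert_ne_empty _ _, ?_⟩, ?_⟩
        · exact mem_chainsOf.2 ⟨Finset.insert_subset hm (fun y hy => hbS y hy), hchain⟩
        · obtain ⟨hmem, hlb⟩ := minOf_spec hchain (Finset.insert_nonempty m b)
          rcases Finset.mem_insert.1 hmem with h | h
          · exact h
          · exact absurd (hlb m (Finset.mem_insert_self m b))
              (Finset.ssubset_def.1 (hbgt _ h)).2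
      · intro c hc
        obtain ⟨hc', hmin⟩ := Finset.mem_filter.1 hc
        obtain ⟨hne0, hcS⟩ := Finset.mem_erase.1 hc'
        obtain ⟨hsub, hch⟩ := mem_chainsOf.1 hcS
        have hne : c.Nonempty := Finset.nonempty_iff_ne_empty.2 hne0
        exact Finset.insert_erase (hmin ▸ (minOf_spec hch hne).1)
      · intro b hb
        obtain ⟨hsub, _⟩ := mem_chainsOf.1 hb
        refine Finset.erase_insert ?_
        intro hmb
        exact (Finset.mem_filter.1 (hsub hmb)).2.ne rfl
      · intro c hc
        obtain ⟨hc', hmin⟩ := Finset.mem_filter.1 hc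
        obtain ⟨hne0, hcS⟩ := Finset.mem_erase.1 hc'
        obtain ⟨hsub, hch⟩ := mem_chainsOf.1 hcS
        have hne : c.Nonempty := Finset.nonempty_iff_ne_empty.2 hne0
        have hmem : m ∈ c := hmin ▸ (minOf_spec hch hne).1
        rw [Finset.card_erase_of_mem hmem, neg_one_pow_pred (Finset.card_pos.2 hne), neg_neg]
    rw [key, csum]
    rw [Finset.sum_neg_distrib]
  rw [h0, h1, Finset.sum_congr rfl h2, Finset.sum_neg_distrib]
  ring

lemma csum_union_mul {L U : Finset (Finset V)} (hd : Disjoint L U)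
    (hcross : ∀ l ∈ L, ∀ u ∈ U, l ⊆ u) :
    csum (L ∪ U) = csum L * csum U := by
  rw [csum, csum, csum, Finset.sum_mul_sum]
  rw [← Finset.sum_product']
  refine (Finset.sum_nbij' (fun c => (c.filter (· ∈ L), c.filter (· ∈ U)))
    (fun p => p.1 ∪ p.2) ?_ ?_ ?_ ?_ ?_)
  · intro c hc
    obtain ⟨hsub, hch⟩ := mem_chainsOf.1 hc
    refine Finset.mem_product.2 ⟨mem_chainsOf.2 ⟨?_, ?_⟩, mem_chainsOf.2 ⟨?_, ?_⟩⟩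
    · intro y hy; exact (Finset.mem_filter.1 hy).2
    · intro y hy z hz
      exact hch y (Finset.mem_of_mem_filter y hy) z (Finset.mem_of_mem_filter z hz)
    · intro y hy; exact (Finset.mem_filter.1 hy).2
    · intro y hy z hz
      exact hch y (Finset.mem_of_mem_filter y hy) z (Finset.mem_of_mem_filter z hz)
  · intro p hp
    obtain ⟨hp1, hp2⟩ := Finset.mem_product.1 hp
    obtain ⟨hs1, hc1⟩ := mem_chainsOf.1 hp1
    obtain ⟨hs2, hc2⟩ := mem_chainsOf.1 hp2
    refine mem_chainsOf.2 ⟨Finset.union_subset_union hs1 hs2, ?_⟩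
    intro y hy z hz
    rcases Finset.mem_union.1 hy with hy' | hy' <;> rcases Finset.mem_union.1 hz with hz' | hz'
    · exact hc1 y hy' z hz'
    · exact Or.inl (hcross y (hs1 hy') z (hs2 hz'))
    · exact Or.inr (hcross z (hs1 hz') y (hs2 hy'))
    · exact hc2 y hy' z hz'
  · intro c hc
    obtain ⟨hsub, _⟩ := mem_chainsOf.1 hc
    simp only []
    rw [← Finset.filter_or]
    refine Finset.filter_true_of_mem ?_
    intro y hy
    exact Finset.mem_union.1 (hsub hy)
  · intro p hp
    obtain ⟨hp1, hp2⟩ := Finset.mem_product.1 hp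
    obtain ⟨hs1, _⟩ := mem_chainsOf.1 hp1
    obtain ⟨hs2, _⟩ := mem_chainsOf.1 hp2
    have h1 : (p.1 ∪ p.2).filter (· ∈ L) = p.1 := by
      ext y
      simp only [Finset.mem_filter, Finset.mem_union]
      constructor
      · rintro ⟨hy | hy, hyL⟩
        · exact hy
        · exact absurd hyL (Finset.disjoint_right.1 hd (hs2 hy))
      · intro hy; exact ⟨Or.inl hy, hs1 hy⟩
    have h2 : (p.1 ∪ p.2).filter (· ∈ U) = p.2 := by
      ext y
      simp only [Finset.mem_filter, Finset.mem_union]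
      constructor
      · rintro ⟨hy | hy, hyU⟩
        · exact absurd hyU (Finset.disjoint_left.1 hd (hs1 hy))
        · exact hy
      · intro hy; exact ⟨Or.inr hy, hs2 hy⟩
    exact Prod.ext h1 h2
  · intro c hc
    obtain ⟨hsub, _⟩ := mem_chainsOf.1 hc
    simp only []
    have hdisj : Disjoint (c.filter (· ∈ L)) (c.filter (· ∈ U)) := by
      rw [Finset.disjoint_left]
      intro y hy1 hy2
      exact absurd (Finset.mem_filter.1 hy2).2
        (Finset.disjoint_left.1 hd (Finset.mem_filter.1 hy1).2)
    have hcup : c = c.filter (· ∈ L) ∪ c.filter (· ∈ U) := by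
      rw [← Finset.filter_or]
      exact (Finset.filter_true_of_mem (fun y hy => Finset.mem_union.1 (hsub hy))).symm
    rw [hcup, Finset.card_union_of_disjoint hdisj, pow_add]
    congr 1 <;> rw [← hcup]

def propersOf (m : Finset V) : Finset (Finset V) := (m.powerset.erase ∅).erase m

lemma mem_propersOf {m t : Finset V} : t ∈ propersOf m ↔ t ⊆ m ∧ t ≠ ∅ ∧ t ≠ m := by
  simp only [propersOf, Finset.mem_erase, Finset.mem_powerset]
  tauto

lemma csum_propersOf : ∀ n (m : Finset V), m.card = n → m.Nonempty →
    csum (propersOf m) = (-1 : ℚ) ^ (m.card - 1) := by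
  intro n
  induction n using Nat.strong_induction_on with
  | _ n ih =>
    intro m hcard hne
    rw [csum_eq_max]
    have hfilt : ∀ t ∈ propersOf m, (propersOf m).filter (· ⊂ t) = propersOf t := by
      intro t ht
      obtain ⟨htm, htne, htnm⟩ := mem_propersOf.1 ht
      have htm' : t ⊂ m := Finset.ssubset_iff_subset_ne.2 ⟨htm, htnm⟩
      ext s
      simp only [Finset.mem_filter, mem_propersOf]
      constructor
      · rintro ⟨⟨hsm, hsne, hsnm⟩, hst⟩
        exact ⟨hst.subset, hsne, hst.ne⟩
      · rintro ⟨hst, hsne, hsnt⟩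
        have hst' : s ⊂ t := Finset.ssubset_iff_subset_ne.2 ⟨hst, hsnt⟩
        exact ⟨⟨hst.trans htm, hsne, (hst'.trans htm').ne⟩, hst'⟩
    have hsum : ∑ t ∈ propersOf m, csum ((propersOf m).filter (· ⊂ t))
        = ∑ t ∈ propersOf m, -(-1:ℚ)^t.card := by
      refine Finset.sum_congr rfl fun t ht => ?_
      obtain ⟨htm, htne, htnm⟩ := mem_propersOf.1 ht
      rw [hfilt t ht]
      have hlt : t.card < n :=
        hcard ▸ Finset.card_lt_card (Finset.ssubset_iff_subset_ne.2 ⟨htm, htnm⟩)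
      have htne' : t.Nonempty := Finset.nonempty_iff_ne_empty.2 htne
      rw [ih t.card hlt t rfl htne', neg_one_pow_pred (Finset.card_pos.2 htne')]
    rw [hsum, Finset.sum_neg_distrib]
    have hpow : ∑ t ∈ m.powerset, (-1:ℚ)^t.card = 0 := by
      have h := Finset.sum_powerset_neg_one_pow_card_of_nonempty (x := m) hne
      have : ((∑ t ∈ m.powerset, (-1:ℤ)^t.card : ℤ) : ℚ) = 0 := by rw [h]; rfl
      push_cast at this
      exact this
    have hm1 : m ∈ m.powerset.erase ∅ :=
      Finset.mem_erase.2 ⟨Finset.nonempty_iff_ne_empty.1 hne,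
        Finset.mem_powerset.2 subset_rfl⟩
    have hm2 : (∅ : Finset V) ∈ m.powerset := Finset.mem_powerset.2 (Finset.empty_subset m)
    rw [propersOf, Finset.sum_erase_eq_sub hm1, Finset.sum_erase_eq_sub hm2, hpow,
      neg_one_pow_pred (Finset.card_pos.2 hne)]
    simp

lemma chainChi_eq (S : Finset (Finset V)) : chainChi S = 1 - csum S := by
  have hset : S.powerset.filter
      (fun c => c.Nonempty ∧ ∀ y ∈ c, ∀ z ∈ c, y ⊆ z ∨ z ⊆ y)
      = (chainsOf S).filter (fun c => c ≠ ∅) := by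
    ext c
    simp only [chainsOf, Finset.mem_filter, Finset.mem_powerset, IsChainF,
      Finset.nonempty_iff_ne_empty]
    tauto
  rw [chainChi, hset, Finset.filter_ne']
  have h1 : ∑ c ∈ (chainsOf S).erase ∅, (-1:ℚ)^(c.card - 1)
      = ∑ c ∈ (chainsOf S).erase ∅, -(-1:ℚ)^c.card := by
    refine Finset.sum_congr rfl fun c hc => ?_
    have : c.Nonempty := Finset.nonempty_iff_ne_empty.2 (Finset.mem_erase.1 hc).1
    exact neg_one_pow_pred (Finset.card_pos.2 this)
  rw [h1, Finset.sum_neg_distrib, Finset.sum_erase_eq_sub (empty_mem_chainsOf S)]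
  simp [csum]

end Aux

/-- Gauss-Bonnet `∑_x K⁺(x) = χ(G)` for any finite abstract
simplicial complex `G`. -/
theorem gaussBonnet_Kplus {V : Type*} [DecidableEq V]
    (G : Finset (Finset V))
    (hne : ∀ x ∈ G, x.Nonempty)
    (hsub : ∀ x ∈ G, ∀ y : Finset V, y ⊆ x → y.Nonempty → y ∈ G) :
    ∑ x ∈ G, Kplus G x = eulerChar G := by
  have hbelow : ∀ x ∈ G, csum (G.filter (· ⊂ x)) = (-1:ℚ)^(x.card - 1) := by
    intro x hx
    have hset : G.filter (· ⊂ x) = propersOf x := by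
      ext y
      simp only [Finset.mem_filter, mem_propersOf]
      constructor
      · rintro ⟨hyG, hyx⟩
        exact ⟨hyx.subset, Finset.nonempty_iff_ne_empty.1 (hne y hyG), hyx.ne⟩
      · rintro ⟨hyx, hyne, hynx⟩
        exact ⟨hsub x hx y hyx (Finset.nonempty_iff_ne_empty.2 hyne),
          Finset.ssubset_iff_subset_ne.2 ⟨hyx, hynx⟩⟩
    rw [hset]
    exact csum_propersOf x.card x rfl (hne x hx)
  have hK : ∀ x ∈ G, Kplus G x = csum (G.filter (x ⊂ ·)) := by
    intro x hx
    have hor : G.filter (fun y => y ⊂ x ∨ x ⊂ y)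
        = G.filter (· ⊂ x) ∪ G.filter (x ⊂ ·) := Finset.filter_or _ _ _
    have hdisj : Disjoint (G.filter (· ⊂ x)) (G.filter (x ⊂ ·)) := by
      rw [Finset.disjoint_left]
      intro y hy1 hy2
      exact ((Finset.mem_filter.1 hy1).2.trans (Finset.mem_filter.1 hy2).2).ne rfl
    have hcross : ∀ l ∈ G.filter (· ⊂ x), ∀ u ∈ G.filter (x ⊂ ·), l ⊆ u := by
      intro l hl u hu
      exact ((Finset.mem_filter.1 hl).2.trans (Finset.mem_filter.1 hu).2).subset
    rw [Kplus, sphereChi, chainChi_eq, hor, csum_union_mul hdisj hcross, hbelow x hx]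
    have : ((-1:ℚ)^(x.card - 1)) * ((-1:ℚ)^(x.card - 1)) = 1 := by
      rw [← pow_add]
      exact Even.neg_one_pow ⟨x.card - 1, rfl⟩
    rw [sub_sub_cancel, ← mul_assoc, this, one_mul]
  have hmax := csum_eq_max G
  have hmin := csum_eq_min G
  have hG : csum G = 1 - eulerChar G := by
    rw [hmax, eulerChar, Finset.sum_congr rfl hbelow]
  rw [Finset.sum_congr rfl hK]
  have : ∑ x ∈ G, csum (G.filter (x ⊂ ·)) = 1 - csum G := by linarith
  rw [this, hG]
  ring
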